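/- For every x ∈ ℝ, l₀(x) ≥ L̄*(x). -/

import Mathlib

open Filter MeasureTheory Set Topology

noncomputable section

/-- `c · log m` as an extended real number, where `m ∈ [0,∞]`. -/
def elog (c : ℝ) (m : ENNReal) : EReal := (c : EReal) * ENNReal.log m

/-- The generalized log-moment generating function `L̄` associated with the net
`(μ_α, c_α)` indexed by the filter `lf`:
`L̄(t) = limsup_α c_α · log ∫ exp(t·x/c_α) dμ_α(x)`. -/
def genLogMGF {ι : Type*} (lf : Filter ι) (μ : ι → Measure ℝ) (c : ι → ℝ) (t : ℝ) : EReal :=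
  Filter.limsup
    (fun i => elog (c i) (∫⁻ x : ℝ, ENNReal.ofReal (Real.exp (t * x / c i)) ∂ (μ i))) lf

/-- Legendre–Fenchel transform of an `EReal`-valued function on `ℝ`, evaluated at an
extended real argument: `L*(x) = sup_t (t·x − L(t))`. -/
def LegendreEE (L : ℝ → EReal) (x : EReal) : EReal := ⨆ t : ℝ, ((t : EReal) * x - L t)

open Classical in
/-- The right derivative of a convex `EReal`-valued function at `t`, with the conventions
`L'_r(t) = +∞` when `L(s) = +∞` for all `s > t` and `L'_r(t) = -∞` when `L(s) = -∞` for
some `s > t`; otherwise it is the infimum of the right difference quotients. -/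
def rightDerivE (L : ℝ → EReal) (t : ℝ) : EReal :=
  if ∀ s : ℝ, t < s → L s = ⊤ then ⊤
  else if ∃ s : ℝ, t < s ∧ L s = ⊥ then ⊥
  else ⨅ s ∈ Set.Ioi t, (L s - L t) * (((s - t)⁻¹ : ℝ) : EReal)

/-- The left derivative of a convex `EReal`-valued function at `t` (supremum of left
difference quotients). -/
def leftDerivE (L : ℝ → EReal) (t : ℝ) : EReal :=
  ⨆ s ∈ Set.Iio t, (L t - L s) * (((t - s)⁻¹ : ℝ) : EReal)

/-- Right limit at `a` of an `EReal`-valued function (as a `limsup`; it coincides with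
`lim_{t→a⁺} f(t)` whenever the latter exists, e.g. for monotone or convex `f`). -/
def rightLimE (f : ℝ → EReal) (a : ℝ) : EReal := Filter.limsup f (nhdsWithin a (Set.Ioi a))

/-- Left limit at `a` of an `EReal`-valued function (as a `limsup`; it coincides with
`lim_{t→a⁻} f(t)` whenever the latter exists). -/
def leftLimE (f : ℝ → EReal) (a : ℝ) : EReal := Filter.limsup f (nhdsWithin a (Set.Iio a))

/-- `L` is affine on the interval `(a, b]`. -/
def AffineOnIoc (L : ℝ → EReal) (a b : ℝ) : Prop :=
  ∃ p q : ℝ, ∀ s ∈ Set.Ioc a b, L s = ((p * s + q : ℝ) : EReal)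

/-- `λ̃ = sup {t > λ : L is affine on (λ, t]}` (equal to `λ` if there is no such `t`). -/
def tildeOf (L : ℝ → EReal) (lam : ℝ) : ℝ :=
  sSup (insert lam {t : ℝ | lam < t ∧ AffineOnIoc L lam t})

/-- Differentiability at `t` of an `EReal`-valued function: `L(t)` is finite and the
difference quotients converge to a (finite) real number. -/
def EDifferentiableAt (L : ℝ → EReal) (t : ℝ) : Prop :=
  (∃ r : ℝ, L t = (r : EReal)) ∧
  ∃ d : ℝ, Filter.Tendsto (fun s => (L s - L t) * (((s - t)⁻¹ : ℝ) : EReal))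
    (nhdsWithin t {t}ᶜ) (nhds (d : EReal))

/-- The function `l₀(x) = − lim_{ε→0⁺} limsup_α c_α · log μ_α((x−ε, x+ε))` (the limit over
`ε` exists by monotonicity and equals the infimum). -/
def l0fun {ι : Type*} (lf : Filter ι) (μ : ι → Measure ℝ) (c : ι → ℝ) (x : ℝ) : EReal :=
  - ⨅ ε ∈ Set.Ioi (0:ℝ),
      Filter.limsup (fun i => elog (c i) (μ i (Set.Ioo (x - ε) (x + ε)))) lf

/-- `L` restricted to `[0,∞)` is proper: `(−∞,+∞]`-valued with at least one finite value. -/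
def LbarProper (L : ℝ → EReal) : Prop :=
  (∀ t : ℝ, 0 ≤ t → L t ≠ ⊥) ∧ ∃ t : ℝ, 0 ≤ t ∧ L t ≠ ⊤

/-- `μ([x, y])` for extended-real endpoints `x, y`, with `μ` regarded as a measure on
`[-∞, +∞]`. -/
def muIccE (μ : Measure ℝ) (x y : EReal) : ENNReal :=
  μ {z : ℝ | x ≤ (z : EReal) ∧ (z : EReal) ≤ y}

/-- `μ((x, y))` for extended-real endpoints `x, y`. -/
def muIooE (μ : Measure ℝ) (x y : EReal) : ENNReal :=
  μ {z : ℝ | x < (z : EReal) ∧ (z : EReal) < y}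

open Classical in
/-- The Legendre transform extended to `[-∞,+∞]` by continuity, with the paper's
convention `L̄*(−∞) = −L̄(0⁺)`. -/
def LegendreExt (L : ℝ → EReal) (x : EReal) : EReal :=
  if x = ⊥ then -(rightLimE L 0) else if x = ⊤ then ⊤ else LegendreEE L x

end

private lemma coe_mul_add_eq (c a : ℝ) (hc : 0 < c) (B : EReal) :
    (c : EReal) * ((a : EReal) + B) = ((c * a : ℝ) : EReal) + (c : EReal) * B := by
  induction B using EReal.rec with
  | bot => rw [EReal.add_bot _, EReal.coe_mul_bot_of_pos hc, EReal.add_bot]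
  | coe b => norm_cast; ring
  | top => rw [EReal.coe_add_top, EReal.coe_mul_top_of_pos hc, EReal.coe_add_top]

private lemma coe_sub_coe_add (a r : ℝ) (M : EReal) :
    (a : EReal) - ((r : EReal) + M) = ((a - r : ℝ) : EReal) - M := by
  induction M using EReal.rec with
  | bot =>
      rw [EReal.add_bot _, EReal.sub_bot (EReal.coe_ne_bot _), EReal.sub_bot (EReal.coe_ne_bot _)]
  | coe b => norm_cast; ring
  | top => rw [EReal.coe_add_top, EReal.sub_top, EReal.sub_top]

theorem statement12
    {ι : Type*} (lf : Filter ι) [lf.NeBot]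
    (μ : ι → Measure ℝ) [∀ i, IsProbabilityMeasure (μ i)]
    (c : ι → ℝ) (hc : ∀ i, 0 < c i) (hc0 : Filter.Tendsto c lf (nhds (0 : ℝ)))
    (L : ℝ → EReal) (hL : L = genLogMGF lf μ c)
    :
    ∀ x : ℝ, LegendreEE L ((x : ℝ) : EReal) ≤ l0fun lf μ c x := by
  intro x
  set l₀ : EReal := l0fun lf μ c x with hl₀
  apply iSup_le
  intro t
  -- main estimate for each ε > 0
  have key : ∀ ε : ℝ, 0 < ε →
      (t : EReal) * (x : EReal) - L t ≤ ((|t| * ε : ℝ) : EReal) + l₀ := by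
    intro ε hε
    set r : ℝ := t * x - |t| * ε with hr
    set f : ι → EReal := fun i => elog (c i) (μ i (Set.Ioo (x - ε) (x + ε))) with hf
    -- pointwise bound
    have hpt : ∀ i, (r : EReal) + f i ≤
        elog (c i) (∫⁻ y : ℝ, ENNReal.ofReal (Real.exp (t * y / c i)) ∂ (μ i)) := by
      intro i
      have hci := hc i
      have hIoo : ENNReal.ofReal (Real.exp (r / c i)) * μ i (Set.Ioo (x - ε) (x + ε)) ≤
          ∫⁻ y : ℝ, ENNReal.ofReal (Real.exp (t * y / c i)) ∂ (μ i) := by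
        calc ENNReal.ofReal (Real.exp (r / c i)) * μ i (Set.Ioo (x - ε) (x + ε))
            = ∫⁻ _ in Set.Ioo (x - ε) (x + ε), ENNReal.ofReal (Real.exp (r / c i)) ∂ (μ i) := by
              rw [setLIntegral_const]
          _ ≤ ∫⁻ y in Set.Ioo (x - ε) (x + ε),
                ENNReal.ofReal (Real.exp (t * y / c i)) ∂ (μ i) := by
              apply setLIntegral_mono
              · exact (Real.measurable_exp.comp ((measurable_id.const_mul t).div_const _)).ennreal_ofReal
              · intro y hy
                apply ENNReal.ofReal_le_ofReal
                apply Real.exp_le_exp.2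
                have h1 : |y - x| ≤ ε :=
                  abs_le.2 ⟨by linarith [hy.1], by linarith [hy.2]⟩
                have h2 : |t * (y - x)| ≤ |t| * ε := by
                  rw [abs_mul]
                  exact mul_le_mul_of_nonneg_left h1 (abs_nonneg t)
                have h3 : t * y = t * x + t * (y - x) := by ring
                gcongr
                linarith [neg_abs_le (t * (y - x))]
          _ ≤ ∫⁻ y : ℝ, ENNReal.ofReal (Real.exp (t * y / c i)) ∂ (μ i) :=
              setLIntegral_le_lintegral _ _
      have hlog : ENNReal.log (ENNReal.ofReal (Real.exp (r / c i)) *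
          μ i (Set.Ioo (x - ε) (x + ε))) =
          ((r / c i : ℝ) : EReal) + ENNReal.log (μ i (Set.Ioo (x - ε) (x + ε))) := by
        rw [ENNReal.log_mul_add, ENNReal.log_ofReal_of_pos (Real.exp_pos _), Real.log_exp]
      have h1 : (r : EReal) + f i =
          elog (c i) (ENNReal.ofReal (Real.exp (r / c i)) * μ i (Set.Ioo (x - ε) (x + ε))) := by
        rw [elog, hlog, coe_mul_add_eq _ _ hci, mul_div_cancel₀ _ (ne_of_gt hci)]
        rfl
      rw [h1, elog, elog]
      exact mul_le_mul_of_nonneg_left (ENNReal.log_monotone hIoo) (by exact_mod_cast hci.le)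
    -- limsup bound
    have hlim : (r : EReal) + Filter.limsup f lf ≤ L t := by
      have h2 : Filter.limsup f lf + Filter.liminf (fun _ : ι => (r : EReal)) lf ≤
          Filter.limsup (f + fun _ => (r : EReal)) lf := EReal.le_limsup_add
      rw [Filter.liminf_const] at h2
      have h3 : Filter.limsup (f + fun _ => (r : EReal)) lf ≤ L t := by
        rw [hL, genLogMGF]
        apply Filter.limsup_le_limsup
        · filter_upwards with i
          simpa [add_comm] using hpt i
        · isBoundedDefault
        · isBoundedDefault
      rw [add_comm]
      exact h2.trans h3
    -- conclude
    have h4 : (t : EReal) * (x : EReal) - L t ≤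
        ((t * x : ℝ) : EReal) - ((r : EReal) + Filter.limsup f lf) := by
      rw [← EReal.coe_mul]
      exact EReal.sub_le_sub le_rfl hlim
    have h5 : ((t * x : ℝ) : EReal) - ((r : EReal) + Filter.limsup f lf) =
        ((|t| * ε : ℝ) : EReal) + (- Filter.limsup f lf) := by
      rw [coe_sub_coe_add, sub_eq_add_neg]
      congr 2
      rw [hr]; ring
    have h6 : - Filter.limsup f lf ≤ l₀ := by
      rw [hl₀, l0fun]
      apply EReal.neg_le_neg_iff.2
      exact biInf_le _ hε
    calc (t : EReal) * (x : EReal) - L t ≤ _ := h4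
      _ = _ := h5
      _ ≤ ((|t| * ε : ℝ) : EReal) + l₀ := add_le_add_right h6 _
  -- pass to the limit ε → 0
  clear_value l₀
  clear hl₀
  revert key
  induction l₀ using EReal.rec with
  | bot =>
      intro key
      have := key 1 one_pos
      rwa [EReal.add_bot] at this
  | top => exact fun _ => le_top
  | coe y =>
      intro key
      by_contra hcon
      push_neg at hcon
      obtain ⟨z, hz1, hz2⟩ := EReal.exists_between_coe_real hcon
      have hδ : 0 < z - y := by exact_mod_cast sub_pos.2 (by exact_mod_cast hz1)
      set ε : ℝ := (z - y) / (|t| + 1) with hε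
      have hεpos : 0 < ε := div_pos hδ (by positivity)
      have hb := key ε hεpos
      have hle : |t| * ε + y ≤ z := by
        have h1 : |t| * ε ≤ z - y := by
          rw [hε, mul_comm, div_mul_eq_mul_div, div_le_iff₀ (by positivity : (0:ℝ) < |t| + 1)]
          nlinarith [abs_nonneg t, hδ]
        linarith
      have : (t : EReal) * (x : EReal) - L t ≤ (z : EReal) := by
        refine hb.trans ?_
        rw [← EReal.coe_add]
        exact_mod_cast hle
      exact absurd hz2 (not_lt.2 this)
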